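/- Let (T, M) be a local domain with residue field k and residue map π : T → k, and let D be an integral domain with fraction field k, viewed as a subring of k. Let A := D ×_k T = π⁻¹(D). If P is a prime ideal of A with P ⊆ M, and Q is the unique prime ideal of T satisfying Q ∩ A = P, then the localizations A_P and T_Q coincide as subrings of the common fraction field of A and T; equivalently, T_Q together with the inclusion A → T_Q is the localization of A at the prime P. -/

import Mathlib

/-- For a local domain `(T, M)` with residue field `k`, residue map `π`, and a subring `D`
of `k` with fraction field `k`, set `A = π⁻¹(D)`. If `P` is a prime of `A` with `P ⊆ M`
and `Q` is the prime of `T` with `Q ∩ A = P`, then `T_Q`, together with the inclusion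
`A → T_Q`, is the localization of `A` at `P` (i.e. `A_P = T_Q`). -/
theorem stmt_4 {T k : Type*} [CommRing T] [IsDomain T] [IsLocalRing T] [Field k]
    (π : T →+* k) (hπ : Function.Surjective π)
    (hker : RingHom.ker π = IsLocalRing.maximalIdeal T)
    (D : Subring k) [IsFractionRing D k]
    (P : Ideal (D.comap π)) [P.IsPrime]
    (hPM : P ≤ (IsLocalRing.maximalIdeal T).comap (D.comap π).subtype)
    (Q : Ideal T) [Q.IsPrime] (hQ : Q.comap (D.comap π).subtype = P)
    (TQ : Type*) [CommRing TQ] [Algebra T TQ] [IsLocalization.AtPrime TQ Q] :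
    @IsLocalization (D.comap π) _ P.primeCompl TQ _
      ((algebraMap T TQ).comp (D.comap π).subtype).toAlgebra := by
  letI : Algebra (D.comap π) TQ := ((algebraMap T TQ).comp (D.comap π).subtype).toAlgebra
  have halg : algebraMap (D.comap π) TQ
      = ((algebraMap T TQ).comp (D.comap π).subtype) := rfl
  have hmem : ∀ a : D.comap π, a ∈ P ↔ (a : T) ∈ Q := by
    intro a; rw [← hQ]; rfl
  have hQM : Q ≤ IsLocalRing.maximalIdeal T :=
    IsLocalRing.le_maximalIdeal (‹Q.IsPrime›.ne_top)
  refine ⟨⟨?_, ?_, ?_⟩⟩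
  · rintro ⟨y, hy⟩
    have hyQ : (y : T) ∉ Q := fun h => hy ((hmem y).2 h)
    simpa [halg] using (IsLocalization.AtPrime.isUnit_to_map_iff TQ Q (y : T)).2 hyQ
  · intro z
    obtain ⟨⟨x, t⟩, h⟩ := IsLocalization.surj (M := Q.primeCompl) z
    obtain ⟨⟨p, q⟩, hq⟩ := IsLocalization.surj (M := nonZeroDivisors D) (π x)
    obtain ⟨⟨r, s⟩, hs⟩ := IsLocalization.surj (M := nonZeroDivisors D) (π (t : T))
    obtain ⟨u, hu⟩ := hπ ((algebraMap D k (q : D)) * (algebraMap D k (s : D)))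
    have hq0 : (q : D) ≠ 0 := nonZeroDivisors.coe_ne_zero q
    have hs0 : (s : D) ≠ 0 := nonZeroDivisors.coe_ne_zero s
    have hinj : Function.Injective (algebraMap D k) := IsFractionRing.injective D k
    have hqk : (algebraMap D k (q : D)) ≠ 0 := by
      intro hh
      exact hq0 (hinj (hh.trans (map_zero _).symm))
    have hsk : (algebraMap D k (s : D)) ≠ 0 := by
      intro hh
      exact hs0 (hinj (hh.trans (map_zero _).symm))
    have huk : π u ≠ 0 := by rw [hu]; exact mul_ne_zero hqk hsk
    have huQ : u ∉ Q := fun hc => huk (by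
      have : u ∈ RingHom.ker π := hker ▸ hQM hc
      simpa [RingHom.mem_ker] using this)
    -- u * x ∈ A
    have hux : u * x ∈ D.comap π := by
      have : π (u * x) = (algebraMap D k (s : D)) * (algebraMap D k (p : D)) := by
        rw [map_mul, hu]
        calc algebraMap D k (q : D) * algebraMap D k (s : D) * π x
            = algebraMap D k (s : D) * (π x * algebraMap D k (q : D)) := by ring
          _ = algebraMap D k (s : D) * algebraMap D k (p : D) := by rw [hq]
      simp only [Subring.mem_comap, this]
      exact Subring.mul_mem D (s : D).2 p.2
    -- u * t ∈ A
    have hut : u * (t : T) ∈ D.comap π := by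
      have : π (u * (t : T)) = (algebraMap D k (q : D)) * (algebraMap D k (r : D)) := by
        rw [map_mul, hu]
        calc algebraMap D k (q : D) * algebraMap D k (s : D) * π (t : T)
            = algebraMap D k (q : D) * (π (t : T) * algebraMap D k (s : D)) := by ring
          _ = algebraMap D k (q : D) * algebraMap D k (r : D) := by rw [hs]
      simp only [Subring.mem_comap, this]
      exact Subring.mul_mem D (q : D).2 r.2
    have hutQ : u * (t : T) ∉ Q := fun hc => by
      rcases (‹Q.IsPrime›.mem_or_mem hc) with h1 | h2
      · exact huQ h1
      · exact t.2 h2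
    refine ⟨⟨⟨u * x, hux⟩, ⟨⟨u * (t : T), hut⟩, fun hc => hutQ ((hmem _).1 hc)⟩⟩, ?_⟩
    simp only [halg, RingHom.comp_apply]
    show z * algebraMap T TQ (u * (t : T)) = algebraMap T TQ (u * x)
    rw [map_mul, map_mul, ← mul_assoc, mul_comm z, mul_assoc, h]
  · intro x y hxy
    have hinjT : Function.Injective (algebraMap T TQ) :=
      IsLocalization.injective TQ Q.primeCompl_le_nonZeroDivisors
    have : (x : T) = (y : T) := hinjT (by simpa [halg] using hxy)
    exact ⟨1, by rw [Subtype.ext this]⟩
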